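/- arXiv:2511.08157 — 3 statements merged into one kernel-verified Lean document; each statement's English description precedes it below -/
import Mathlib

section
/- Let D be a triangulated category with a bounded t-structure, d ≥ 1, and Y a full subcategory of D^{[-d+1,0]} closed under d-factors. Then Y^⊥ = {Z ∈ D^{[-d+1,0]} : Hom(Y, Z) = 0} is a positive torsion-free class. -/
open CategoryTheory Category Limits Pretriangulated Triangulated

universe v u

variable {C : Type u} [Category.{v} C] [Preadditive C] [HasZeroObject C] [HasShift C ℤ]
  [∀ (n : ℤ), (shiftFunctor C n).Additive] [Pretriangulated C]

/-- The t-structure `t` is bounded. -/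
def IsBoundedTStr (t : TStructure C) : Prop :=
  ∀ X : C, ∃ a b : ℤ, t.ge a X ∧ t.le b X

/-- The `d`-extended heart `D^{[-d+1,0]}` of the t-structure `t`, as a set of objects. -/
def extHeart (t : TStructure C) (d : ℕ) : Set C :=
  fun X => t.le 0 X ∧ t.ge (1 - (d : ℤ)) X

/-- A set of objects closed under isomorphisms. -/
def IsoClosed (S : Set C) : Prop := ∀ ⦃X Y : C⦄, (X ≅ Y) → X ∈ S → Y ∈ S

/-- `Z ∈ D^{[-d+1,0]}` is a `d`-factor of `𝒳`: there are `d` distinguished triangles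
`Z_i → X_i → Z_{i-1} → Z_i[1]` (`1 ≤ i ≤ d`) with `Z_0 = Z`, `Z_i ∈ D^{[-d+1,0]}` and
`X_i ∈ 𝒳`. -/
def IsDFactor (t : TStructure C) (d : ℕ) (𝒳 : Set C) (Z : C) : Prop :=
  Z ∈ extHeart t d ∧
  ∃ (Zc : ℕ → C) (Xc : ℕ → C), Zc 0 = Z ∧
    ∀ i : ℕ, 1 ≤ i → i ≤ d →
      Zc i ∈ extHeart t d ∧ Xc i ∈ 𝒳 ∧
      ∃ (f : Zc i ⟶ Xc i) (g : Xc i ⟶ Zc (i - 1)) (h : Zc (i - 1) ⟶ (Zc i)⟦(1 : ℤ)⟧),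
        Triangle.mk f g h ∈ (distTriang C)

/-- `Fac_d(𝒳)`, the set of `d`-factors of `𝒳`. -/
def facd (t : TStructure C) (d : ℕ) (𝒳 : Set C) : Set C := fun Z => IsDFactor t d 𝒳 Z

/-- `𝒳` is closed under `d`-factors. -/
def ClosedUnderDFactors (t : TStructure C) (d : ℕ) (𝒳 : Set C) : Prop :=
  ∀ Z : C, IsDFactor t d 𝒳 Z → Z ∈ 𝒳

/-- `S` is closed under extensions: the middle term of any distinguished triangle whose
outer terms lie in `S` lies in `S`. -/
def ExtClosed (S : Set C) : Prop :=
  ∀ ⦃X Y Z : C⦄ (f : X ⟶ Y) (g : Y ⟶ Z) (h : Z ⟶ X⟦(1 : ℤ)⟧),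
    Triangle.mk f g h ∈ (distTriang C) → X ∈ S → Z ∈ S → Y ∈ S

/-- `𝒳 ⊆ D^{[-d+1,0]}` is `d`-FAE closed: closed under isomorphisms, `d`-factors and
extensions. -/
def IsDFAEClosed (t : TStructure C) (d : ℕ) (𝒳 : Set C) : Prop :=
  𝒳 ⊆ extHeart t d ∧ IsoClosed 𝒳 ∧ ClosedUnderDFactors t d 𝒳 ∧ ExtClosed 𝒳

/-- `A * B`: the set of objects `Z` fitting in a distinguished triangle `X → Z → Y → X[1]`
with `X ∈ A` and `Y ∈ B`. -/
def star (A B : Set C) : Set C := fun Z =>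
  ∃ (X : C) (_ : X ∈ A) (Y : C) (_ : Y ∈ B) (f : X ⟶ Z) (g : Z ⟶ Y) (h : Y ⟶ X⟦(1 : ℤ)⟧),
    Triangle.mk f g h ∈ (distTriang C)

/-- A suspended subcategory: closed under isomorphisms, extensions and positive shifts. -/
def Suspended (S : Set C) : Prop :=
  IsoClosed S ∧ ExtClosed S ∧ ∀ X ∈ S, X⟦(1 : ℤ)⟧ ∈ S

/-- The aisle `D^{≤ n}` as a set. -/
def aisle (t : TStructure C) (n : ℤ) : Set C := fun X => t.le n X

/-- The coaisle `D^{≥ n}` as a set. -/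
def coaisle (t : TStructure C) (n : ℤ) : Set C := fun X => t.ge n X

/-- The right Hom-orthogonal `S^⊥` inside the extended heart. -/
def rPerp (t : TStructure C) (d : ℕ) (S : Set C) : Set C :=
  fun Z => Z ∈ extHeart t d ∧ ∀ Y ∈ S, ∀ f : Y ⟶ Z, f = 0

/-- The left Hom-orthogonal `^⊥S` inside the extended heart. -/
def lPerp (t : TStructure C) (d : ℕ) (S : Set C) : Set C :=
  fun Z => Z ∈ extHeart t d ∧ ∀ Y ∈ S, ∀ f : Z ⟶ Y, f = 0

/-- `S^{⊥_{≤0}} = {Z ∈ D^{[-d+1,0]} : Hom(S, Z[j]) = 0 for all j ≤ 0}`. -/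
def rPerpLe0 (t : TStructure C) (d : ℕ) (S : Set C) : Set C :=
  fun Z => Z ∈ extHeart t d ∧ ∀ Y ∈ S, ∀ j : ℤ, j ≤ 0 → ∀ f : Y ⟶ Z⟦j⟧, f = 0

/-- `^{⊥_{≤0}}S = {Z ∈ D^{[-d+1,0]} : Hom(Z, S[j]) = 0 for all j ≤ 0}`. -/
def lPerpLe0 (t : TStructure C) (d : ℕ) (S : Set C) : Set C :=
  fun Z => Z ∈ extHeart t d ∧ ∀ Y ∈ S, ∀ j : ℤ, j ≤ 0 → ∀ f : Z ⟶ Y⟦j⟧, f = 0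

/-- `(T, F)` is a torsion pair in the extended heart. -/
def IsTorsionPair (t : TStructure C) (d : ℕ) (T F : Set C) : Prop :=
  T ⊆ extHeart t d ∧ F ⊆ extHeart t d ∧ T = lPerp t d F ∧ F = rPerp t d T

/-- `(T, F)` is a positive torsion pair: a torsion pair with `Hom(T, F[j]) = 0` for all
`j ≤ 0`. -/
def IsPositiveTorsionPair (t : TStructure C) (d : ℕ) (T F : Set C) : Prop :=
  IsTorsionPair t d T F ∧
  ∀ X ∈ T, ∀ Y ∈ F, ∀ j : ℤ, j ≤ 0 → ∀ f : X ⟶ Y⟦j⟧, f = 0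

/-- `(T, F)` is an `s`-torsion pair in the extended heart: `D^{[-d+1,0]} = T * F`,
`Hom(T, F) = 0` and `Hom(T, F[-1]) = 0`. -/
def IsSTorsionPair (t : TStructure C) (d : ℕ) (T F : Set C) : Prop :=
  T ⊆ extHeart t d ∧ F ⊆ extHeart t d ∧
  (∀ Z ∈ extHeart t d,
    ∃ (X : C) (_ : X ∈ T) (Y : C) (_ : Y ∈ F) (f : X ⟶ Z) (g : Z ⟶ Y)
      (h : Y ⟶ X⟦(1 : ℤ)⟧), Triangle.mk f g h ∈ (distTriang C)) ∧
  (∀ X ∈ T, ∀ Y ∈ F, ∀ f : X ⟶ Y, f = 0) ∧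
  (∀ X ∈ T, ∀ Y ∈ F, ∀ f : X ⟶ Y⟦(-1 : ℤ)⟧, f = 0)

/-- A semibrick in the `d`-extended heart. -/
def IsSemibrick (t : TStructure C) (d : ℕ) (S : Set C) : Prop :=
  S ⊆ extHeart t d ∧
  (∀ X ∈ S, ¬ IsZero X ∧ ∀ f : X ⟶ X, f ≠ 0 → IsIso f) ∧
  (∀ X ∈ S, ∀ Y ∈ S, ∀ i : ℤ, i < 0 → ∀ f : X ⟶ Y⟦i⟧, f = 0) ∧
  (∀ X ∈ S, ∀ Y ∈ S, IsEmpty (X ≅ Y) → ∀ f : X ⟶ Y, f = 0)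

/-- The simple objects of an extension-closed subcategory `W` (whose conflations are the
distinguished triangles with all three terms in `W`): nonzero objects admitting no
conflation `L ↣ X ↠ M` in `W` with both `L` and `M` nonzero. -/
def simOf (W : Set C) : Set C := fun X =>
  X ∈ W ∧ ¬ IsZero X ∧
  ∀ ⦃L M : C⦄ (f : L ⟶ X) (g : X ⟶ M) (h : M ⟶ L⟦(1 : ℤ)⟧),
    Triangle.mk f g h ∈ (distTriang C) → L ∈ W → M ∈ W → IsZero L ∨ IsZero M

/-- `FiltMem S X`: the object `X` admits a finite filtration with subquotients in `S`. -/
inductive FiltMem (S : Set C) : C → Prop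
  | zero (X : C) : IsZero X → FiltMem S X
  | step (Y X Sm : C) (f : Y ⟶ X) (g : X ⟶ Sm) (h : Sm ⟶ Y⟦(1 : ℤ)⟧) :
      Triangle.mk f g h ∈ (distTriang C) → FiltMem S Y → Sm ∈ S → FiltMem S X

/-- `ExtClosureMem S X`: membership in the extension closure of `S` (the smallest
subcategory containing `S` and the zero objects, closed under isomorphisms and
extensions). -/
inductive ExtClosureMem (S : Set C) : C → Prop
  | of (X : C) : X ∈ S → ExtClosureMem S X
  | zero (X : C) : IsZero X → ExtClosureMem S X
  | iso (X Y : C) : (X ≅ Y) → ExtClosureMem S X → ExtClosureMem S Y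
  | ext (X Y Z : C) (f : X ⟶ Y) (g : Y ⟶ Z) (h : Z ⟶ X⟦(1 : ℤ)⟧) :
      Triangle.mk f g h ∈ (distTriang C) → ExtClosureMem S X → ExtClosureMem S Z →
      ExtClosureMem S Y

/-- A wide subcategory of the `d`-extended heart: closed under isomorphisms and
extensions, with `Hom(W, W[i]) = 0` for `i < 0`, and such that the restricted
extriangulated structure is abelian, i.e., there is an abelian structure on the
corresponding full subcategory whose short exact sequences (kernel-cokernel pairs) are
exactly the distinguished triangles with all three terms in `W`. -/
def IsWide (t : TStructure C) (d : ℕ) (W : Set C) : Prop :=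
  W ⊆ extHeart t d ∧ IsoClosed W ∧ ExtClosed W ∧
  (∀ X ∈ W, ∀ Y ∈ W, ∀ i : ℤ, i < 0 → ∀ f : X ⟶ Y⟦i⟧, f = 0) ∧
  ∃ _ : Abelian (ObjectProperty.FullSubcategory fun X => X ∈ W),
    ∀ (X Y Z : ObjectProperty.FullSubcategory fun X => X ∈ W) (f : X ⟶ Y) (g : Y ⟶ Z),
      ((f ≫ g = 0) ∧
        (∀ (V : ObjectProperty.FullSubcategory fun X => X ∈ W) (k : V ⟶ Y), k ≫ g = 0 →
          ∃! l : V ⟶ X, l ≫ f = k) ∧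
        (∀ (V : ObjectProperty.FullSubcategory fun X => X ∈ W) (k : Y ⟶ V), f ≫ k = 0 →
          ∃! l : Z ⟶ V, g ≫ l = k))
      ↔ ∃ h : Z.obj ⟶ X.obj⟦(1 : ℤ)⟧,
          Triangle.mk (show X.obj ⟶ Y.obj from f.hom) (show Y.obj ⟶ Z.obj from g.hom) h ∈
            (distTriang C)

/-- A finite-length wide subcategory: a wide subcategory in which every object has a
finite filtration with simple subquotients. -/
def IsFiniteLengthWide (t : TStructure C) (d : ℕ) (W : Set C) : Prop :=
  IsWide t d W ∧ ∀ X ∈ W, FiltMem (simOf W) X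

/-- The shift `S[n]` of a set of objects. -/
def shiftSet (S : Set C) (n : ℤ) : Set C := fun X => X⟦-n⟧ ∈ S

/-- The exact heart `H_T = (D^{≤ -d} * T) ∩ (T^⊥[1] * D^{≥ 0})` of a `d`-FAE closed
subcategory `T`. -/
def heartOf (t : TStructure C) (d : ℕ) (T : Set C) : Set C :=
  star (aisle t (-(d : ℤ))) T ∩ star (shiftSet (rPerp t d T) 1) (coaisle t 0)

/-- `phiClosure t d S`: the smallest `d`-FAE closed subcategory of the extended heart
containing `S`. -/
def phiClosure (t : TStructure C) (d : ℕ) (S : Set C) : Set C :=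
  fun X => ∀ U : Set C, IsDFAEClosed t d U → S ⊆ U → X ∈ U


namespace MyAux

variable (t : TStructure C)


variable (t : TStructure C)

lemma homZero {a b : ℤ} {X Y : C} (hX : t.le a X) (hY : t.ge b Y) (hab : a < b)
    (f : X ⟶ Y) : f = 0 := by
  have h1 : t.le 0 (X⟦a⟧) := t.le_shift a a 0 (by omega) X hX
  have h2 : t.ge (b - a) (Y⟦a⟧) := t.ge_shift b a (b - a) (by omega) Y hY
  have h3 : t.ge 1 (Y⟦a⟧) := t.ge_antitone (by omega) _ h2
  have h4 := t.zero' ((shiftFunctor C a).map f) h1 h3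
  apply (shiftFunctor C a).map_injective
  rw [h4, Functor.map_zero]

lemma GE_ext (n : ℤ) {T : Triangle C} (hT : T ∈ distTriang C)
    (h₁ : t.ge n T.obj₁) (h₃ : t.ge n T.obj₃) : t.ge n T.obj₂ := by
  obtain ⟨X, Yt, hX, hY, f, g, h, mem⟩ := t.exists_triangle T.obj₂ (n - 1) n (by ring)
  have hf2 : f ≫ T.mor₂ = 0 := homZero t hX h₃ (by omega) _
  obtain ⟨q, hq⟩ := Triangle.coyoneda_exact₂ T hT f hf2
  have hf : f = 0 := by rw [hq, homZero t hX h₁ (by omega) q, zero_comp]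
  have mem' := inv_rot_of_distTriang _ mem
  have h5 : (𝟙 X) ≫ (Triangle.mk f g h).invRotate.mor₂ = 0 := by
    rw [hf]; exact comp_zero
  obtain ⟨w, hw⟩ := Triangle.coyoneda_exact₂ _ mem' (𝟙 X) h5
  have hw0 : w = 0 :=
    homZero t hX (t.ge_shift n (-1) (n + 1) (by omega) Yt hY) (by omega) w
  have hXz : IsZero X := by
    rw [IsZero.iff_id_eq_zero, hw, hw0]; exact zero_comp
  have : IsIso g := (Triangle.isZero₁_iff_isIso₂ _ mem).1 hXz
  exact ((t.ge n).prop_iff_of_iso (asIso g)).2 hY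

lemma LE_ext (n : ℤ) {T : Triangle C} (hT : T ∈ distTriang C)
    (h₁ : t.le n T.obj₁) (h₃ : t.le n T.obj₃) : t.le n T.obj₂ := by
  obtain ⟨X, Yt, hX, hY, f, g, h, mem⟩ := t.exists_triangle T.obj₂ n (n + 1) rfl
  have hg1 : T.mor₁ ≫ g = 0 := homZero t h₁ hY (by omega) _
  obtain ⟨q, hq⟩ := Triangle.yoneda_exact₂ T hT g hg1
  have hg : g = 0 := by rw [hq, homZero t h₃ hY (by omega) q, comp_zero]
  have mem' := rot_of_distTriang _ mem
  have h5 : (Triangle.mk f g h).rotate.mor₁ ≫ (𝟙 Yt) = 0 := by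
    rw [hg]; exact zero_comp
  obtain ⟨w, hw⟩ := Triangle.yoneda_exact₂ _ mem' (𝟙 Yt) h5
  have hw0 : w = 0 :=
    homZero t (t.le_shift n 1 (n - 1) (by omega) X hX) hY (by omega) w
  have hYz : IsZero Yt := by
    rw [IsZero.iff_id_eq_zero, hw, hw0]; exact comp_zero
  have : IsIso f := (Triangle.isZero₃_iff_isIso₁ _ mem).1 hYz
  exact ((t.le n).prop_iff_of_iso (asIso f)).1 hX



lemma distTriang_of_iso {T : Triangle C} (hT : T ∈ distTriang C) {A B D : C}
    (e₁ : T.obj₁ ≅ A) (e₂ : T.obj₂ ≅ B) (e₃ : T.obj₃ ≅ D) :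
    ∃ (f : A ⟶ B) (g : B ⟶ D) (h : D ⟶ A⟦(1 : ℤ)⟧),
      Triangle.mk f g h ∈ distTriang C := by
  refine ⟨e₁.inv ≫ T.mor₁ ≫ e₂.hom, e₂.inv ≫ T.mor₂ ≫ e₃.hom,
    e₃.inv ≫ T.mor₃ ≫ (shiftFunctor C (1 : ℤ)).map e₁.hom, ?_⟩
  refine isomorphic_distinguished _ hT _ ?_
  refine Triangle.isoMk _ _ e₁.symm e₂.symm e₃.symm ?_ ?_ ?_
  · dsimp; erw [assoc, assoc, Iso.hom_inv_id, comp_id]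
  · dsimp; erw [assoc, assoc, Iso.hom_inv_id, comp_id]
  · dsimp; erw [assoc, assoc, ← Functor.map_comp, Iso.hom_inv_id, CategoryTheory.Functor.map_id, comp_id]

noncomputable def piIsoBiprod (F : WalkingPair → C) :
    (∏ᶜ F) ≅ (F WalkingPair.left) ⊞ (F WalkingPair.right) where
  hom := biprod.lift (Pi.π F WalkingPair.left) (Pi.π F WalkingPair.right)
  inv := Pi.lift (fun j => WalkingPair.casesOn j biprod.fst biprod.snd)
  hom_inv_id := by
    ext j
    rcases j with ⟨_ | _⟩ <;> simp
  inv_hom_id := by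
    apply biprod.hom_ext <;> simp

lemma biprod_distTriang (T₁ T₂ : Triangle C) (H₁ : T₁ ∈ distTriang C)
    (H₂ : T₂ ∈ distTriang C) :
    ∃ (f : T₁.obj₁ ⊞ T₂.obj₁ ⟶ T₁.obj₂ ⊞ T₂.obj₂)
      (g : T₁.obj₂ ⊞ T₂.obj₂ ⟶ T₁.obj₃ ⊞ T₂.obj₃)
      (h : T₁.obj₃ ⊞ T₂.obj₃ ⟶ (T₁.obj₁ ⊞ T₂.obj₁)⟦(1 : ℤ)⟧),
      Triangle.mk f g h ∈ distTriang C := by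
  let T : WalkingPair → Triangle C := fun j => WalkingPair.casesOn j T₁ T₂
  have hT : ∀ j, T j ∈ distTriang C := by rintro (_ | _) <;> assumption
  have mem := productTriangle_distinguished T hT
  exact distTriang_of_iso mem
    (piIsoBiprod (fun j => (T j).obj₁)) (piIsoBiprod (fun j => (T j).obj₂))
    (piIsoBiprod (fun j => (T j).obj₃))

/-- shift-add iso -/
noncomputable def sAdd (X : C) (a b c : ℤ) (h : a + b = c) : X⟦c⟧ ≅ (X⟦a⟧)⟦b⟧ :=
  (shiftFunctorAdd' C a b c h).app X

/-- `D1`: a distinguished triangle `(A, Y', Y' ⊞ B)` when `A ≅ B⟦-1⟧`. -/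
lemma yAdd (Y' B A : C) (e : A ≅ B⟦(-1 : ℤ)⟧) :
    ∃ (f : A ⟶ Y') (g : Y' ⟶ Y' ⊞ B) (h : Y' ⊞ B ⟶ A⟦(1 : ℤ)⟧),
      Triangle.mk f g h ∈ distTriang C :=
  distTriang_of_iso (inv_rot_of_distTriang _ (binaryBiproductTriangle_distinguished Y' B))
    e.symm (Iso.refl _) (Iso.refl _)

/-- `D2`: a distinguished triangle `(Y' ⊞ A, Y', B)` when `B ≅ A⟦1⟧`. -/
lemma yRemove (Y' A B : C) (e : B ≅ A⟦(1 : ℤ)⟧) :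
    ∃ (f : Y' ⊞ A ⟶ Y') (g : Y' ⟶ B) (h : B ⟶ (Y' ⊞ A)⟦(1 : ℤ)⟧),
      Triangle.mk f g h ∈ distTriang C := by
  obtain ⟨f, g, h, mem⟩ := biprod_distTriang (contractibleTriangle Y')
    ((contractibleTriangle A).rotate) (contractible_distinguished Y')
    (rot_of_distTriang _ (contractible_distinguished A))
  exact distTriang_of_iso mem (Iso.refl _)
    (isoBiprodZero (isZero_zero C)).symm
    ((isoZeroBiprod (isZero_zero C)).symm ≪≫ e.symm)

lemma mem_extHeart {d : ℕ} {X : C} {a b : ℤ} (h1 : t.le a X) (h2 : t.ge b X)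
    (ha : a ≤ 0) (hb : 1 - (d : ℤ) ≤ b) : X ∈ extHeart t d :=
  ⟨t.le_monotone ha _ h1, t.ge_antitone hb _ h2⟩

lemma shift_mem_extHeart {d : ℕ} {X : C} {a b m : ℤ} (h1 : t.le a X) (h2 : t.ge b X)
    (ha : a - m ≤ 0) (hb : 1 - (d : ℤ) ≤ b - m) : (X⟦m⟧) ∈ extHeart t d :=
  mem_extHeart t (t.le_shift a m (a - m) (by ring) X h1)
    (t.ge_shift b m (b - m) (by ring) X h2) ha hb

lemma biprod_mem_extHeart {d : ℕ} {X Y : C} (hX : X ∈ extHeart t d)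
    (hY : Y ∈ extHeart t d) : (X ⊞ Y) ∈ extHeart t d :=
  ⟨LE_ext t _ (binaryBiproductTriangle_distinguished X Y) hX.1 hY.1,
   GE_ext t _ (binaryBiproductTriangle_distinguished X Y) hX.2 hY.2⟩

/-- The key induction: truncations of `Y`, their shifts being in `𝒴` together with `Y`,
and the factorization property. -/
lemma key {d : ℕ} (hd : 1 ≤ d) (𝒴 : Set C) (h𝒴 : 𝒴 ⊆ extHeart t d)
    (hfac : ClosedUnderDFactors t d 𝒴) {Y : C} (hY : Y ∈ 𝒴) :
    ∀ k : ℕ, k ≤ d → ∃ Tk : C, t.le 0 Tk ∧ t.ge ((k : ℤ) + 1 - (d : ℤ)) Tk ∧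
      (k = 0 → Tk = Y) ∧ (1 ≤ k → (Y ⊞ Tk⟦(k : ℤ)⟧) ∈ 𝒴) ∧
      (∀ Z, Z ∈ rPerp t d 𝒴 → ∀ n : ℕ, k ≤ n → ∀ g : Y⟦(n : ℤ)⟧ ⟶ Z,
        (∀ h : Tk⟦(n : ℤ)⟧ ⟶ Z, h = 0) → g = 0) := by
  have hYe := h𝒴 hY
  intro k
  induction k with
  | zero =>
    intro _
    refine ⟨Y, hYe.1, ?_, fun _ => rfl, fun h => by omega, ?_⟩
    · simpa using hYe.2
    · intro Z hZ n hn g hvan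
      exact hvan g
  | succ k ih =>
    intro hk
    obtain ⟨Tk, hTkLE, hTkGE, hTk0, hTkmem, hTkfac⟩ := ih (by omega)
    obtain ⟨P', T', hP'LE, hT'GE, f₀, g₀, h₀, Htr⟩ :=
      t.exists_triangle Tk ((k : ℤ) + 1 - (d : ℤ)) ((k : ℤ) + 2 - (d : ℤ)) (by ring)
    have hT'LE : t.le 0 T' := by
      refine LE_ext t 0 (rot_of_distTriang _ Htr) hTkLE ?_
      exact t.le_monotone (show (k : ℤ) - (d : ℤ) ≤ 0 by omega) _
        (t.le_shift ((k : ℤ) + 1 - (d : ℤ)) 1 ((k : ℤ) - (d : ℤ)) (by ring) P' hP'LE)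
    have hP'GE : t.ge ((k : ℤ) + 1 - (d : ℤ)) P' := by
      refine GE_ext t _ (inv_rot_of_distTriang _ Htr) ?_ hTkGE
      exact t.ge_antitone (by omega) _
        (t.ge_shift ((k : ℤ) + 2 - (d : ℤ)) (-1) ((k : ℤ) + 3 - (d : ℤ)) (by ring) T' hT'GE)
    -- the new object `W = Y ⊞ T'⟦k+1⟧` is a `d`-factor of `𝒴`
    have hW : (Y ⊞ T'⟦(k : ℤ) + 1⟧) ∈ 𝒴 := by
      apply hfac
      refine ⟨biprod_mem_extHeart t hYe
          (shift_mem_extHeart t hT'LE hT'GE (m := (k : ℤ) + 1) (by omega) (by omega)), ?_⟩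
      rcases Nat.eq_zero_or_pos k with hk0 | hk1
      · -- level 1 chain
        subst hk0
        have hTkY : Tk = Y := hTk0 rfl
        refine ⟨fun j => match j with
          | 0 => Y ⊞ T'⟦((0 : ℕ) : ℤ) + 1⟧
          | 1 => T'⟦(0 : ℤ)⟧
          | (m + 2) => if m % 2 = 0 then P'⟦-((m : ℕ) : ℤ)⟧ else Y ⊞ P'⟦-((m : ℕ) : ℤ)⟧,
          fun _ => Y, rfl, ?_⟩
        intro i hi1 hid
        rcases i with _ | _ | m
        · omega
        · refine ⟨shift_mem_extHeart t hT'LE hT'GE (m := (0 : ℤ)) (by omega) (by omega),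
            hY, ?_⟩
          exact yAdd Y (T'⟦((0 : ℕ) : ℤ) + 1⟧) (T'⟦(0 : ℤ)⟧)
            (sAdd T' (((0 : ℕ) : ℤ) + 1) (-1) 0 (by omega))
        · rcases m with _ | m
          · refine ⟨shift_mem_extHeart t hP'LE hP'GE (m := -(((0:ℕ)) : ℤ)) (by omega)
              (by omega), hY, ?_⟩
            have SH := Triangle.shift_distinguished _ Htr ((0 : ℤ))
            exact distTriang_of_iso SH
              (eqToIso (by norm_num) : P'⟦(0 : ℤ)⟧ ≅ P'⟦-(((0:ℕ)) : ℤ)⟧)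
              ((shiftFunctorZero C ℤ).app Tk ≪≫ eqToIso hTkY) (Iso.refl _)
          · have h23 : m + 3 ≤ d := hid
            have heL : t.le ((m : ℤ) + 2 - (d : ℤ)) (P'⟦-(((m + 1 : ℕ)) : ℤ)⟧) :=
              t.le_shift (((0 : ℕ) : ℤ) + 1 - (d : ℤ)) (-(((m + 1 : ℕ)) : ℤ)) _
                (by push_cast; ring) P' hP'LE
            have heG : t.ge ((m : ℤ) + 2 - (d : ℤ)) (P'⟦-(((m + 1 : ℕ)) : ℤ)⟧) :=
              t.ge_shift (((0 : ℕ) : ℤ) + 1 - (d : ℤ)) (-(((m + 1 : ℕ)) : ℤ)) _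
                (by push_cast; ring) P' hP'GE
            have hmem1 : (P'⟦-(((m + 1 : ℕ)) : ℤ)⟧) ∈ extHeart t d :=
              mem_extHeart t heL heG (by omega) (by omega)
            show (if (m + 1) % 2 = 0 then P'⟦-(((m + 1 : ℕ)) : ℤ)⟧
                else Y ⊞ P'⟦-(((m + 1 : ℕ)) : ℤ)⟧) ∈ extHeart t d ∧ Y ∈ 𝒴 ∧
              ∃ (f : (if (m + 1) % 2 = 0 then P'⟦-(((m + 1 : ℕ)) : ℤ)⟧
                  else Y ⊞ P'⟦-(((m + 1 : ℕ)) : ℤ)⟧) ⟶ Y)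
                (g : Y ⟶ (if m % 2 = 0 then P'⟦-((m : ℕ) : ℤ)⟧ else Y ⊞ P'⟦-((m : ℕ) : ℤ)⟧))
                (h : (if m % 2 = 0 then P'⟦-((m : ℕ) : ℤ)⟧ else Y ⊞ P'⟦-((m : ℕ) : ℤ)⟧) ⟶
                  (if (m + 1) % 2 = 0 then P'⟦-(((m + 1 : ℕ)) : ℤ)⟧
                    else Y ⊞ P'⟦-(((m + 1 : ℕ)) : ℤ)⟧)⟦(1 : ℤ)⟧),
                Triangle.mk f g h ∈ distTriang C
            rcases Nat.mod_two_eq_zero_or_one m with h2 | h2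
            · have h1 : ¬ ((m + 1) % 2 = 0) := by omega
              rw [if_neg h1, if_pos h2]
              refine ⟨biprod_mem_extHeart t hYe hmem1, hY, ?_⟩
              exact yRemove Y (P'⟦-(((m + 1 : ℕ)) : ℤ)⟧) (P'⟦-((m : ℕ) : ℤ)⟧)
                (sAdd P' (-(((m + 1 : ℕ)) : ℤ)) 1 (-((m : ℕ) : ℤ)) (by omega))
            · have h1 : (m + 1) % 2 = 0 := by omega
              rw [if_pos h1, if_neg (by omega : ¬ (m % 2 = 0))]
              refine ⟨hmem1, hY, ?_⟩
              exact yAdd Y (P'⟦-((m : ℕ) : ℤ)⟧) (P'⟦-(((m + 1 : ℕ)) : ℤ)⟧)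
                (sAdd P' (-((m : ℕ) : ℤ)) (-1) (-(((m + 1 : ℕ)) : ℤ)) (by omega))
      · -- level k+1 ≥ 2 chain
        refine ⟨fun j => match j with
          | 0 => Y ⊞ T'⟦(k : ℤ) + 1⟧
          | 1 => T'⟦(k : ℤ)⟧
          | (m + 2) => if m % 2 = 0 then Y ⊞ P'⟦(k : ℤ) - ((m : ℕ) : ℤ)⟧
              else P'⟦(k : ℤ) - ((m : ℕ) : ℤ)⟧,
          fun j => if j = 2 then Y ⊞ Tk⟦(k : ℤ)⟧ else Y, rfl, ?_⟩
        intro i hi1 hid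
        rcases i with _ | _ | m
        · omega
        · refine ⟨shift_mem_extHeart t hT'LE hT'GE (m := (k : ℤ)) (by omega) (by omega),
            hY, ?_⟩
          exact yAdd Y (T'⟦(k : ℤ) + 1⟧) (T'⟦(k : ℤ)⟧)
            (sAdd T' ((k : ℤ) + 1) (-1) (k : ℤ) (by omega))
        · rcases m with _ | m
          · refine ⟨biprod_mem_extHeart t hYe
              (shift_mem_extHeart t hP'LE hP'GE (m := (k : ℤ) - (((0:ℕ)) : ℤ)) (by omega)
                (by omega)), hTkmem hk1, ?_⟩
            obtain ⟨f, g, h, mem⟩ := biprod_distTriang (contractibleTriangle Y)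
              ((Triangle.shiftFunctor C ((k : ℤ))).obj (Triangle.mk f₀ g₀ h₀))
              (contractible_distinguished Y)
              (Triangle.shift_distinguished _ Htr (k : ℤ))
            refine distTriang_of_iso mem
              (eqToIso (by norm_num) :
                Y ⊞ P'⟦(k : ℤ)⟧ ≅ Y ⊞ P'⟦(k : ℤ) - (((0:ℕ)) : ℤ)⟧)
              (Iso.refl _) ((isoZeroBiprod (isZero_zero C)).symm)
          · have h23 : m + 3 ≤ d := hid
            have heL : t.le ((m : ℤ) + 2 - (d : ℤ)) (P'⟦(k : ℤ) - (((m + 1 : ℕ)) : ℤ)⟧) :=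
              t.le_shift ((k : ℤ) + 1 - (d : ℤ)) ((k : ℤ) - (((m + 1 : ℕ)) : ℤ)) _
                (by push_cast; ring) P' hP'LE
            have heG : t.ge ((m : ℤ) + 2 - (d : ℤ)) (P'⟦(k : ℤ) - (((m + 1 : ℕ)) : ℤ)⟧) :=
              t.ge_shift ((k : ℤ) + 1 - (d : ℤ)) ((k : ℤ) - (((m + 1 : ℕ)) : ℤ)) _
                (by push_cast; ring) P' hP'GE
            have hmem1 : (P'⟦(k : ℤ) - (((m + 1 : ℕ)) : ℤ)⟧) ∈ extHeart t d :=
              mem_extHeart t heL heG (by omega) (by omega)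
            show (if (m + 1) % 2 = 0 then Y ⊞ P'⟦(k : ℤ) - (((m + 1 : ℕ)) : ℤ)⟧
                else P'⟦(k : ℤ) - (((m + 1 : ℕ)) : ℤ)⟧) ∈ extHeart t d ∧ Y ∈ 𝒴 ∧
              ∃ (f : (if (m + 1) % 2 = 0 then Y ⊞ P'⟦(k : ℤ) - (((m + 1 : ℕ)) : ℤ)⟧
                  else P'⟦(k : ℤ) - (((m + 1 : ℕ)) : ℤ)⟧) ⟶ Y)
                (g : Y ⟶ (if m % 2 = 0 then Y ⊞ P'⟦(k : ℤ) - ((m : ℕ) : ℤ)⟧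
                  else P'⟦(k : ℤ) - ((m : ℕ) : ℤ)⟧))
                (h : (if m % 2 = 0 then Y ⊞ P'⟦(k : ℤ) - ((m : ℕ) : ℤ)⟧
                  else P'⟦(k : ℤ) - ((m : ℕ) : ℤ)⟧) ⟶
                  (if (m + 1) % 2 = 0 then Y ⊞ P'⟦(k : ℤ) - (((m + 1 : ℕ)) : ℤ)⟧
                    else P'⟦(k : ℤ) - (((m + 1 : ℕ)) : ℤ)⟧)⟦(1 : ℤ)⟧),
                Triangle.mk f g h ∈ distTriang C
            rcases Nat.mod_two_eq_zero_or_one m with h2 | h2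
            · have h1 : ¬ ((m + 1) % 2 = 0) := by omega
              rw [if_neg h1, if_pos h2]
              refine ⟨hmem1, hY, ?_⟩
              exact yAdd Y (P'⟦(k : ℤ) - ((m : ℕ) : ℤ)⟧) (P'⟦(k : ℤ) - (((m + 1 : ℕ)) : ℤ)⟧)
                (sAdd P' ((k : ℤ) - ((m : ℕ) : ℤ)) (-1) ((k : ℤ) - (((m + 1 : ℕ)) : ℤ))
                  (by omega))
            · have h1 : (m + 1) % 2 = 0 := by omega
              rw [if_pos h1, if_neg (by omega : ¬ (m % 2 = 0))]
              refine ⟨biprod_mem_extHeart t hYe hmem1, hY, ?_⟩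
              exact yRemove Y (P'⟦(k : ℤ) - (((m + 1 : ℕ)) : ℤ)⟧)
                (P'⟦(k : ℤ) - ((m : ℕ) : ℤ)⟧)
                (sAdd P' ((k : ℤ) - (((m + 1 : ℕ)) : ℤ)) 1 ((k : ℤ) - ((m : ℕ) : ℤ))
                  (by omega))
    refine ⟨T', hT'LE, ?_, fun h => absurd h (Nat.succ_ne_zero k), fun _ => ?_, ?_⟩
    · rw [show ((k + 1 : ℕ) : ℤ) + 1 - (d : ℤ) = (k : ℤ) + 2 - (d : ℤ) by push_cast; ring]
      exact hT'GE
    · rw [show ((k + 1 : ℕ) : ℤ) = (k : ℤ) + 1 by push_cast; ring]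
      exact hW
    · intro Z hZ n hn g hvan
      refine hTkfac Z hZ n (by omega) g ?_
      intro h'
      have SH := Triangle.shift_distinguished _ Htr (n : ℤ)
      have hv : ((Triangle.shiftFunctor C ((n : ℤ))).obj (Triangle.mk f₀ g₀ h₀)).mor₁ ≫ h' = 0 :=
        homZero t (t.le_shift ((k : ℤ) + 1 - (d : ℤ)) (n : ℤ) ((k : ℤ) + 1 - (d : ℤ) - (n : ℤ))
          (by ring) P' hP'LE) hZ.1.2 (by omega) _
      obtain ⟨q, hq⟩ := Triangle.yoneda_exact₂ _ SH h' hv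
      rw [hq, hvan q]; exact comp_zero

/-- `Hom(Y, Z⟦-n⟧) = 0` in shifted form : any `Y⟦n⟧ ⟶ Z` vanishes. -/
lemma keyVanish {d : ℕ} (hd : 1 ≤ d) (𝒴 : Set C) (h𝒴 : 𝒴 ⊆ extHeart t d)
    (hfac : ClosedUnderDFactors t d 𝒴) {Y Z : C} (hY : Y ∈ 𝒴) (hZ : Z ∈ rPerp t d 𝒴)
    (n : ℕ) (g : Y⟦(n : ℤ)⟧ ⟶ Z) : g = 0 := by
  rcases Nat.eq_zero_or_pos n with hn | hn
  · subst hn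
    have e := (shiftFunctorZero C ℤ).app Y
    have h0 : e.inv ≫ g = 0 := hZ.2 Y hY _
    have : e.hom ≫ e.inv ≫ g = g := by rw [Iso.hom_inv_id_assoc]
    rw [← this, h0, comp_zero]
  · by_cases hnd : d ≤ n
    · exact homZero t (t.le_shift 0 (n : ℤ) (-(n : ℤ)) (by ring) Y (h𝒴 hY).1)
        hZ.1.2 (by omega) g
    · obtain ⟨Tn, _, _, _, hmem, hfact⟩ :=
        key t hd 𝒴 h𝒴 hfac hY n (by omega)
      refine hfact Z hZ n le_rfl g ?_
      intro h
      have hw : (biprod.snd : Y ⊞ Tn⟦(n : ℤ)⟧ ⟶ _) ≫ h = 0 := hZ.2 _ (hmem (by omega)) _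
      have heq : (biprod.inr : Tn⟦(n : ℤ)⟧ ⟶ _) ≫ (biprod.snd : Y ⊞ Tn⟦(n : ℤ)⟧ ⟶ _) ≫ h = h := by
        rw [← assoc, biprod.inr_snd, id_comp]
      rw [← heq, hw, comp_zero]

/-- `Hom(𝒴, Z⟦j⟧) = 0` for `j ≤ 0` and `Z ∈ 𝒴^⊥`. -/
lemma keyVanish' {d : ℕ} (hd : 1 ≤ d) (𝒴 : Set C) (h𝒴 : 𝒴 ⊆ extHeart t d)
    (hfac : ClosedUnderDFactors t d 𝒴) {Y Z : C} (hY : Y ∈ 𝒴) (hZ : Z ∈ rPerp t d 𝒴)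
    {j : ℤ} (hj : j ≤ 0) (f : Y ⟶ Z⟦j⟧) : f = 0 := by
  set n : ℕ := (-j).toNat with hn
  have hnj : (n : ℤ) = -j := Int.toNat_of_nonneg (by omega)
  have e : (Z⟦j⟧)⟦(n : ℤ)⟧ ≅ Z :=
    ((shiftFunctorAdd' C j (n : ℤ) 0 (by omega)).symm.app Z) ≪≫ (shiftFunctorZero C ℤ).app Z
  have h0 : (shiftFunctor C ((n : ℤ))).map f ≫ e.hom = 0 :=
    keyVanish t hd 𝒴 h𝒴 hfac hY hZ n _
  have h1 : (shiftFunctor C ((n : ℤ))).map f = 0 := by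
    have := h0 =≫ e.inv
    simpa using this
  apply (shiftFunctor C ((n : ℤ))).map_injective
  rw [h1, Functor.map_zero]

/-- The main positivity statement. -/
lemma positivity {d : ℕ} (hd : 1 ≤ d) (𝒴 : Set C) (h𝒴 : 𝒴 ⊆ extHeart t d)
    (hfac : ClosedUnderDFactors t d 𝒴) {X Z : C} (hX : X ∈ lPerp t d (rPerp t d 𝒴))
    (hZ : Z ∈ rPerp t d 𝒴) {j : ℤ} (hj : j ≤ 0) (f : X ⟶ Z⟦j⟧) : f = 0 := by
  obtain ⟨V, U, hV, hU, f₁, g₁, h₁, mem⟩ := t.exists_triangle (Z⟦j⟧) 0 1 rfl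
  have hfU : f ≫ g₁ = 0 := homZero t hX.1.1 hU (by omega) _
  obtain ⟨f', hf'⟩ := Triangle.coyoneda_exact₂ _ mem f hfU
  have memV : V ∈ rPerp t d 𝒴 := by
    constructor
    · refine ⟨hV, ?_⟩
      refine GE_ext t (1 - (d : ℤ)) (inv_rot_of_distTriang _ mem) ?_ ?_
      · exact t.ge_antitone (by omega) _ (t.ge_shift 1 (-1) 2 (by omega) U hU)
      · exact t.ge_antitone (by omega) _
          (t.ge_shift (1 - (d : ℤ)) j (1 - (d : ℤ) - j) (by ring) Z hZ.1.2)
    · intro Y' hY' u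
      have hc : u ≫ (Triangle.mk f₁ g₁ h₁).invRotate.mor₂ = 0 := by
        have : u ≫ f₁ = 0 := keyVanish' t hd 𝒴 h𝒴 hfac hY' hZ hj (u ≫ f₁)
        exact this
      obtain ⟨w, hw⟩ := Triangle.coyoneda_exact₂ _ (inv_rot_of_distTriang _ mem) u hc
      have hw0 : w = 0 :=
        homZero t (h𝒴 hY').1 (t.ge_shift 1 (-1) 2 (by omega) U hU) (by omega) w
      rw [hw, hw0]; exact zero_comp
  rw [hf', hX.2 V memV f']; exact zero_comp


end MyAux

/-- **(Corollary, `𝒴^⊥` is a positive torsion-free class.)** Let `𝒴 ⊆ D^{[-d+1,0]}` be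
closed under `d`-factors. Then `𝒴^⊥` is a positive torsion-free class. -/
theorem rPerp_is_positive_torsionFree (t : TStructure C) (hb : IsBoundedTStr t)
    (d : ℕ) (hd : 1 ≤ d) (𝒴 : Set C) (h𝒴 : 𝒴 ⊆ extHeart t d)
    (hfac : ClosedUnderDFactors t d 𝒴) :
    IsPositiveTorsionPair t d (lPerp t d (rPerp t d 𝒴)) (rPerp t d 𝒴) := by
  constructor
  · refine ⟨fun X hX => hX.1, fun X hX => hX.1, rfl, ?_⟩
    ext Z
    constructor
    · intro hZ
      exact ⟨hZ.1, fun X hX f => hX.2 Z hZ f⟩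
    · intro hZ
      refine ⟨hZ.1, ?_⟩
      intro Y hY f
      exact hZ.2 Y ⟨h𝒴 hY, fun V hV g => hV.2 Y hY g⟩ f
  · intro X hX Z hZ j hj f
    exact MyAux.positivity t hd 𝒴 h𝒴 hfac hX hZ hj f
end

section
/- Let D be a triangulated category with a bounded t-structure and d ≥ 1. Let T be an s-torsion class and T' a positive torsion class in D^{[-d+1,0]}. If T ∩ (T')^⊥ = 0 and T' ⊆ T, then T = T'. -/
open CategoryTheory Category Limits Pretriangulated Triangulated

universe v u

variable {C : Type u} [Category.{v} C] [Preadditive C] [HasZeroObject C] [HasShift C ℤ]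
  [∀ (n : ℤ), (shiftFunctor C n).Additive] [Pretriangulated C]

/-- **(Lemma, no torsion class strictly in between.)** Let `T` be an `s`-torsion class
and `T'` a positive torsion class in `D^{[-d+1,0]}`. If `T ∩ (T')^⊥ = 0` and `T' ⊆ T`,
then `T = T'`. -/
theorem sTorsion_eq_of_inter_zero (t : TStructure C) (hb : IsBoundedTStr t)
    (d : ℕ) (hd : 1 ≤ d) (T T' : Set C)
    (hT : IsSTorsionPair t d T (rPerp t d T))
    (hT' : IsPositiveTorsionPair t d T' (rPerp t d T'))
    (hzero : ∀ Z : C, Z ∈ T → Z ∈ rPerp t d T' → IsZero Z)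
    (hsub : T' ⊆ T) :
    T = T' := by
  obtain ⟨hTe, hFe, hdec, hTF0, hTFm1⟩ := hT
  -- key: every object of `rPerp t d T'` lies in `rPerp t d T`
  have key : ∀ Y ∈ rPerp t d T', Y ∈ rPerp t d T := by
    intro Y hY
    obtain ⟨X₀, hX₀, Y₀, hY₀, f, g, h, hdt⟩ := hdec Y (hY.1)
    -- X₀ ∈ rPerp t d T'
    have hX₀perp : X₀ ∈ rPerp t d T' := by
      refine ⟨hTe hX₀, fun Z hZ k => ?_⟩
      have hkf : k ≫ f = 0 := hY.2 Z hZ (k ≫ f)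
      obtain ⟨e, he⟩ := Triangle.coyoneda_exact₂ _
        (inv_rot_of_distTriang _ hdt) k hkf
      have he0 : e = 0 := hTFm1 Z (hsub hZ) Y₀ hY₀ e
      rw [he, he0]; exact zero_comp
    have hX₀zero : IsZero X₀ := hzero X₀ hX₀ hX₀perp
    -- hence `g : Y ⟶ Y₀` is an iso
    have : IsIso ((Triangle.mk f g h).mor₂) :=
      (Triangle.isZero₁_iff_isIso₂ _ hdt).1 hX₀zero
    have hg : IsIso g := this
    refine ⟨hY.1, fun W hW k => ?_⟩
    have : (k ≫ g) ≫ inv g = k := by simp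
    rw [← this, hY₀.2 W hW (k ≫ g), zero_comp]
  apply Set.Subset.antisymm _ hsub
  intro X hX
  have hTP := hT'.1.2.2.1
  rw [hTP]
  exact ⟨hTe hX, fun Y hY f => (key Y hY).2 X hX f⟩
end

section
/- Let D be a triangulated category with a bounded t-structure, d ≥ 1, and S a semibrick in D^{[-d+1,0]}. Let φ(S) be the smallest d-FAE closed subcategory of D^{[-d+1,0]} containing S. Define recursively Φ^0(S) = S and Φ^n(S) = (Fac_d Φ^{n-1}(S)) * (Fac_d Φ^{n-1}(S)) for n ≥ 1. Then φ(S) = ⋃_{n ≥ 0} Φ^n(S). -/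
open CategoryTheory Category Limits Pretriangulated Triangulated

universe v u

variable {C : Type u} [Category.{v} C] [Preadditive C] [HasZeroObject C] [HasShift C ℤ]
  [∀ (n : ℤ), (shiftFunctor C n).Additive] [Pretriangulated C]

/-- The iterated construction `Φ^n(S)`: `Φ^0(S) = S` and
`Φ^n(S) = (Fac_d Φ^{n-1}(S)) * (Fac_d Φ^{n-1}(S))`. -/
def PhiIter (t : TStructure C) (d : ℕ) (S : Set C) : ℕ → Set C
  | 0 => S
  | n + 1 => star (facd t d (PhiIter t d S n)) (facd t d (PhiIter t d S n))


open ZeroObject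

section Aux

variable (t : TStructure C) (d : ℕ)

lemma aux_zero_map {n : ℤ} {X Y : C} (hX : t.le n X) (hY : t.ge (n + 1) Y)
    (f : X ⟶ Y) : f = 0 := by
  have h := t.zero' ((shiftFunctor C n).map f) (t.le_shift n n 0 (by ring) X hX)
    (t.ge_shift (n + 1) n 1 (by ring) Y hY)
  exact (shiftFunctor C n).map_eq_zero_iff.mp h

lemma aux_LE_of_isZero {n : ℤ} {Z : C} (hZ : IsZero Z) : t.le n Z := by
  obtain ⟨X, Y, hX, hY, f, g, h, mem⟩ := t.exists_triangle Z n (n + 1) rfl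
  have hf : f = 0 := hZ.eq_of_tgt _ _
  have T' := inv_rot_of_distTriang _ mem
  obtain ⟨s, hs⟩ := Triangle.coyoneda_exact₂ _ T' (𝟙 X) (by
    show 𝟙 X ≫ f = 0; rw [hf, comp_zero])
  have hs0 : s = 0 := aux_zero_map t hX
    (t.ge_antitone (by omega) _ (t.ge_shift (n + 1) (-1) (n + 2) (by ring) Y hY)) s
  have hXzero : IsZero X := by
    rw [IsZero.iff_id_eq_zero, hs, hs0, zero_comp]; rfl
  exact (t.le n).prop_of_iso (hXzero.isoZero.trans hZ.isoZero.symm) hX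

lemma aux_GE_of_isZero {n : ℤ} {Z : C} (hZ : IsZero Z) : t.ge n Z := by
  obtain ⟨X, Y, hX, hY, f, g, h, mem⟩ := t.exists_triangle Z (n - 1) n (by ring)
  have hg : g = 0 := hZ.eq_of_src _ _
  obtain ⟨r, hr⟩ := Triangle.yoneda_exact₃ _ mem (𝟙 Y) (by show g ≫ 𝟙 Y = 0; rw [hg, zero_comp])
  have hr0 : r = 0 := aux_zero_map t
    (t.le_monotone (show n - 2 ≤ n - 1 by omega) _
      (t.le_shift (n - 1) 1 (n - 2) (by ring) X hX))
    (by rw [show n - 1 + 1 = n by ring]; exact hY) r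
  have hYzero : IsZero Y := by
    rw [IsZero.iff_id_eq_zero, hr, hr0, comp_zero]; rfl
  exact (t.ge n).prop_of_iso (hYzero.isoZero.trans hZ.isoZero.symm) hY

lemma aux_LE_ext (n : ℤ) {T : Triangle C} (hT : T ∈ distTriang C)
    (h₁ : t.le n T.obj₁) (h₃ : t.le n T.obj₃) : t.le n T.obj₂ := by
  obtain ⟨X, Y, hX, hY, f, g, h, mem⟩ := t.exists_triangle T.obj₂ n (n + 1) rfl
  have hc : T.mor₁ ≫ g = 0 := aux_zero_map t h₁ hY _
  obtain ⟨g', hg'⟩ := Triangle.yoneda_exact₂ _ hT g hc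
  have hg'0 : g' = 0 := aux_zero_map t h₃ hY g'
  have hg : g = 0 := by rw [hg', hg'0, comp_zero]
  obtain ⟨r, hr⟩ := Triangle.yoneda_exact₃ _ mem (𝟙 Y) (by show g ≫ 𝟙 Y = 0; rw [hg, zero_comp])
  have hr0 : r = 0 := aux_zero_map t
    (t.le_monotone (show n - 1 ≤ n by omega) _ (t.le_shift n 1 (n - 1) (by ring) X hX)) hY r
  have hYzero : IsZero Y := by rw [IsZero.iff_id_eq_zero, hr, hr0, comp_zero]; rfl
  have : IsIso f := (Triangle.isZero₃_iff_isIso₁ _ mem).1 hYzero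
  exact (t.le n).prop_of_iso (asIso f) hX

lemma aux_GE_ext (n : ℤ) {T : Triangle C} (hT : T ∈ distTriang C)
    (h₁ : t.ge n T.obj₁) (h₃ : t.ge n T.obj₃) : t.ge n T.obj₂ := by
  obtain ⟨X, Y, hX, hY, f, g, h, mem⟩ := t.exists_triangle T.obj₂ (n - 1) n (by ring)
  have hc : f ≫ T.mor₂ = 0 := aux_zero_map t hX (by rw [show n - 1 + 1 = n by ring]; exact h₃) _
  obtain ⟨f', hf'⟩ := Triangle.coyoneda_exact₂ _ hT f hc
  have hf'0 : f' = 0 := aux_zero_map t hX (by rw [show n - 1 + 1 = n by ring]; exact h₁) f'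
  have hf : f = 0 := by rw [hf', hf'0, zero_comp]
  have T' := inv_rot_of_distTriang _ mem
  obtain ⟨s, hs⟩ := Triangle.coyoneda_exact₂ _ T' (𝟙 X) (by
    show 𝟙 X ≫ f = 0; rw [hf, comp_zero])
  have hs0 : s = 0 := aux_zero_map t hX
    (t.ge_antitone (by omega) _ (t.ge_shift n (-1) (n + 1) (by ring) Y hY)) s
  have hXzero : IsZero X := by rw [IsZero.iff_id_eq_zero, hs, hs0, zero_comp]; rfl
  have : IsIso g := (Triangle.isZero₁_iff_isIso₂ _ mem).1 hXzero
  exact (t.ge n).prop_of_iso (asIso g).symm hY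

lemma aux_zero_mem_extHeart : (0 : C) ∈ extHeart t d :=
  ⟨aux_LE_of_isZero t (isZero_zero C), aux_GE_of_isZero t (isZero_zero C)⟩

lemma aux_extHeart_ext {X Y Z : C} (f : X ⟶ Y) (g : Y ⟶ Z) (h : Z ⟶ X⟦(1 : ℤ)⟧)
    (hT : Triangle.mk f g h ∈ distTriang C) (hX : X ∈ extHeart t d) (hZ : Z ∈ extHeart t d) :
    Y ∈ extHeart t d :=
  ⟨aux_LE_ext t 0 hT hX.1 hZ.1, aux_GE_ext t (1 - (d : ℤ)) hT hX.2 hZ.2⟩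

lemma aux_tri_id (X : C) :
    Triangle.mk (𝟙 X) (0 : X ⟶ 0) (0 : (0 : C) ⟶ X⟦(1 : ℤ)⟧) ∈ distTriang C :=
  contractible_distinguished X

lemma aux_tri_id' (X : C) :
    Triangle.mk (0 : (0 : C) ⟶ X) (𝟙 X) (0 : X ⟶ (0 : C)⟦(1 : ℤ)⟧) ∈ distTriang C :=
  contractible_distinguished₁ X

lemma aux_self_dfactor (𝒳 : Set C) {X : C} (hX : X ∈ extHeart t d) (hX' : X ∈ 𝒳) :
    IsDFactor t d 𝒳 X := by
  refine ⟨hX, fun i => if i % 2 = 0 then X else 0, fun _ => X, by simp, fun i hi1 hid => ?_⟩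
  by_cases hp : i % 2 = 0
  · have hp' : (i - 1) % 2 = 1 := by omega
    beta_reduce; rw [hp, hp']; simp only [reduceIte]
    exact ⟨hX, hX', 𝟙 X, 0, 0, aux_tri_id X⟩
  · have hp2 : i % 2 = 1 := by omega
    have hp' : (i - 1) % 2 = 0 := by omega
    beta_reduce; rw [hp2, hp']; simp only [reduceIte, Nat.one_ne_zero, ite_false, ite_true]
    exact ⟨aux_zero_mem_extHeart t d, hX', 0, 𝟙 X, 0, aux_tri_id' X⟩

lemma aux_zero_dfactor (𝒳 : Set C) {s : C} (hs : s ∈ extHeart t d) (hs' : s ∈ 𝒳) :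
    IsDFactor t d 𝒳 (0 : C) := by
  refine ⟨aux_zero_mem_extHeart t d, fun i => if i % 2 = 0 then 0 else s, fun _ => s,
    by simp, fun i hi1 hid => ?_⟩
  by_cases hp : i % 2 = 0
  · have hp' : (i - 1) % 2 = 1 := by omega
    beta_reduce; rw [hp, hp']; simp only [reduceIte, Nat.one_ne_zero, ite_false, ite_true]
    exact ⟨aux_zero_mem_extHeart t d, hs', 0, 𝟙 s, 0, aux_tri_id' s⟩
  · have hp2 : i % 2 = 1 := by omega
    have hp' : (i - 1) % 2 = 0 := by omega
    beta_reduce; rw [hp2, hp']; simp only [reduceIte, Nat.one_ne_zero, ite_false, ite_true]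
    exact ⟨hs, hs', 𝟙 s, 0, 0, aux_tri_id s⟩

lemma aux_facd_mono {𝒳 𝒴 : Set C} (h : 𝒳 ⊆ 𝒴) : facd t d 𝒳 ⊆ facd t d 𝒴 := by
  rintro Z ⟨hZ, Zc, Xc, h0, hi⟩
  exact ⟨hZ, Zc, Xc, h0, fun i hi1 hid =>
    ⟨(hi i hi1 hid).1, h (hi i hi1 hid).2.1, (hi i hi1 hid).2.2⟩⟩

lemma aux_star_mono {A B A' B' : Set C} (hA : A ⊆ A') (hB : B ⊆ B') :
    star A B ⊆ star A' B' := by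
  rintro Z ⟨X, hX, Y, hY, f, g, h, hT⟩
  exact ⟨X, hA hX, Y, hB hY, f, g, h, hT⟩

lemma aux_star_iso {A B : Set C} {Z Z' : C} (e : Z ≅ Z') (hZ : Z ∈ star A B) :
    Z' ∈ star A B := by
  obtain ⟨X, hX, Y, hY, f, g, h, hT⟩ := hZ
  refine ⟨X, hX, Y, hY, f ≫ e.hom, e.inv ≫ g, h, isomorphic_distinguished _ hT _ ?_⟩
  exact Triangle.isoMk _ _ (Iso.refl _) e.symm (Iso.refl _) (by show (f ≫ e.hom) ≫ e.inv = 𝟙 X ≫ f; simp)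
    (by show (e.inv ≫ g) ≫ 𝟙 Y = e.inv ≫ g; simp)
    (by show h ≫ (shiftFunctor C 1).map (𝟙 X) = 𝟙 Y ≫ h; simp)

variable {S : Set C}

lemma aux_PhiIter_subset_extHeart (hS : S ⊆ extHeart t d) (n : ℕ) :
    PhiIter t d S n ⊆ extHeart t d := by
  induction n with
  | zero => exact hS
  | succ n ih =>
    rintro Z ⟨X, hX, Y, hY, f, g, h, hT⟩
    exact aux_extHeart_ext t d f g h hT hX.1 hY.1

lemma aux_S_subset_Phi1 (hS : S ⊆ extHeart t d) : S ⊆ PhiIter t d S 1 := by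
  intro X hX
  exact ⟨X, aux_self_dfactor t d S (hS hX) hX, 0,
    aux_zero_dfactor t d S (hS hX) hX, 𝟙 X, 0, 0, aux_tri_id X⟩

lemma aux_PhiIter_succ (hS : S ⊆ extHeart t d) (n : ℕ) :
    PhiIter t d S n ⊆ PhiIter t d S (n + 1) := by
  induction n with
  | zero => exact aux_S_subset_Phi1 t d hS
  | succ n ih => exact aux_star_mono (aux_facd_mono t d ih) (aux_facd_mono t d ih)

lemma aux_PhiIter_mono (hS : S ⊆ extHeart t d) {m n : ℕ} (hmn : m ≤ n) :
    PhiIter t d S m ⊆ PhiIter t d S n := by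
  induction n with
  | zero =>
    obtain rfl : m = 0 := Nat.le_zero.mp hmn
    exact subset_rfl
  | succ n ih =>
    by_cases h : m ≤ n
    · exact (ih h).trans (aux_PhiIter_succ t d hS n)
    · obtain rfl : m = n + 1 := by omega
      exact subset_rfl

end Aux

/-- **(Lemma, explicit description of `φ(S)`.)** Let `S` be a semibrick in
`D^{[-d+1,0]}`. Then the smallest `d`-FAE closed subcategory `φ(S)` containing `S`
equals `⋃_{n ≥ 0} Φ^n(S)`. -/
theorem phiClosure_eq_union_PhiIter (t : TStructure C) (hb : IsBoundedTStr t)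
    (d : ℕ) (hd : 1 ≤ d) (S : Set C) (hS : IsSemibrick t d S) :
    phiClosure t d S = fun X => ∃ n : ℕ, X ∈ PhiIter t d S n := by
  have hSH : S ⊆ extHeart t d := hS.1
  set U : Set C := fun X => ∃ n : ℕ, X ∈ PhiIter t d S n with hUdef
  have hUsub : U ⊆ extHeart t d := by
    rintro X ⟨n, hn⟩
    exact aux_PhiIter_subset_extHeart t d hSH n hn
  have hUiso : IsoClosed U := by
    rintro X Y e ⟨n, hn⟩
    exact ⟨n + 1, aux_star_iso e (aux_PhiIter_succ t d hSH n hn)⟩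
  have hUfac : ClosedUnderDFactors t d U := by
    rintro Z ⟨hZe, Zc, Xc, h0, hi⟩
    have hch : ∀ i : ℕ, ∃ n : ℕ, 1 ≤ i → i ≤ d → Xc i ∈ PhiIter t d S n := by
      intro i
      by_cases h : 1 ≤ i ∧ i ≤ d
      · obtain ⟨n, hn⟩ := (hi i h.1 h.2).2.1
        exact ⟨n, fun _ _ => hn⟩
      · exact ⟨0, fun h1 h2 => absurd ⟨h1, h2⟩ h⟩
    choose nf hnf using hch
    have hXc : ∀ i, 1 ≤ i → i ≤ d → Xc i ∈ PhiIter t d S ((Finset.range (d + 1)).sup nf) := by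
      intro i h1 h2
      exact aux_PhiIter_mono t d hSH
        (Finset.le_sup (Finset.mem_range.mpr (by omega))) (hnf i h1 h2)
    have hZfac : Z ∈ facd t d (PhiIter t d S ((Finset.range (d + 1)).sup nf)) :=
      ⟨hZe, Zc, Xc, h0, fun i h1 h2 => ⟨(hi i h1 h2).1, hXc i h1 h2, (hi i h1 h2).2.2⟩⟩
    have hs1 : Xc 1 ∈ PhiIter t d S ((Finset.range (d + 1)).sup nf) := hXc 1 le_rfl hd
    have hs1e : Xc 1 ∈ extHeart t d :=
      aux_PhiIter_subset_extHeart t d hSH _ hs1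
    exact ⟨(Finset.range (d + 1)).sup nf + 1, Z, hZfac, 0,
      aux_zero_dfactor t d _ hs1e hs1, 𝟙 Z, 0, 0, aux_tri_id Z⟩
  have hUext : ExtClosed U := by
    rintro X Y Z f g h hT ⟨m, hm⟩ ⟨n, hn⟩
    have hX : X ∈ PhiIter t d S (max m n) := aux_PhiIter_mono t d hSH (le_max_left m n) hm
    have hZ : Z ∈ PhiIter t d S (max m n) := aux_PhiIter_mono t d hSH (le_max_right m n) hn
    exact ⟨max m n + 1, X,
      aux_self_dfactor t d _ (aux_PhiIter_subset_extHeart t d hSH _ hX) hX,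
      Z, aux_self_dfactor t d _ (aux_PhiIter_subset_extHeart t d hSH _ hZ) hZ, f, g, h, hT⟩
  have hUclosed : IsDFAEClosed t d U := ⟨hUsub, hUiso, hUfac, hUext⟩
  have key : ∀ (V : Set C), IsDFAEClosed t d V → S ⊆ V → ∀ n, PhiIter t d S n ⊆ V := by
    intro V hV hSV n
    induction n with
    | zero => exact hSV
    | succ n ih =>
      rintro Z ⟨X, hX, Y, hY, f, g, h, hT⟩
      exact hV.2.2.2 f g h hT (hV.2.2.1 X (aux_facd_mono t d ih hX))
        (hV.2.2.1 Y (aux_facd_mono t d ih hY))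
  apply Set.eq_of_subset_of_subset
  · intro X hX
    exact hX U hUclosed (fun s hs => ⟨0, hs⟩)
  · rintro X ⟨n, hn⟩ V hV hSV
    exact key V hV hSV n hn
end
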